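/- arXiv:1710.05986 — 3 statements merged into one kernel-verified Lean document; each statement's English description precedes it below -/
import Mathlib

section
/- Let f : 𝔻 → ℂ be holomorphic with f(e^{iθ}) := lim_{r→1⁻} f(re^{iθ}) existing with |f(e^{iθ})| = 1, and suppose the limit L := lim_{r→1⁻} (f(e^{iθ}) − f(re^{iθ})) / ((1−r) f(e^{iθ})) exists and is a nonnegative real number. Then lim_{r→1⁻} (1 − |f(re^{iθ})|^2) / (−ln r) = 2L. -/
open Filter Topology

/-- If f is holomorphic on the disc, has radial limit b of modulus 1 at e^{iθ},
and the angular-derivative-type limit L = lim (b − f(re^{iθ}))/((1−r)b) exists in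
[0,∞), then (1 − |f(re^{iθ})|²)/(−ln r) → 2L as r → 1⁻. -/
theorem stmt7 (f : ℂ → ℂ) (hf : DifferentiableOn ℂ f (Metric.ball 0 1))
    (θ : ℝ) (b : ℂ) (hb : ‖b‖ = 1)
    (hblim : Filter.Tendsto (fun r : ℝ => f ((r : ℂ) * Complex.exp (θ * Complex.I)))
      (nhdsWithin 1 (Set.Iio 1)) (nhds b))
    (L : ℝ) (hL : 0 ≤ L)
    (hLlim : Filter.Tendsto
      (fun r : ℝ => (b - f ((r : ℂ) * Complex.exp (θ * Complex.I))) / (((1 : ℂ) - (r : ℂ)) * b))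
      (nhdsWithin 1 (Set.Iio 1)) (nhds (L : ℂ))) :
    Filter.Tendsto
      (fun r : ℝ => (1 - ‖f ((r : ℂ) * Complex.exp (θ * Complex.I))‖ ^ 2) / (-Real.log r))
      (nhdsWithin 1 (Set.Iio 1)) (nhds (2 * L)) := by
  have hb0 : b ≠ 0 := by
    intro h; simp [h] at hb
  set g : ℝ → ℂ := fun r => f ((r : ℂ) * Complex.exp (θ * Complex.I)) with hg
  set w : ℝ → ℂ := fun r => (b - g r) / (((1 : ℂ) - (r : ℂ)) * b) with hw
  have hw_lim : Tendsto w (nhdsWithin 1 (Set.Iio 1)) (nhds (L : ℂ)) := hLlim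
  have hre : Tendsto (fun r => (w r).re) (nhdsWithin 1 (Set.Iio 1)) (nhds L) := by
    have := (Complex.continuous_re.tendsto _).comp hw_lim
    simpa [Function.comp_def] using this
  have hns : Tendsto (fun r => Complex.normSq (w r)) (nhdsWithin 1 (Set.Iio 1)) (nhds (L ^ 2)) := by
    have := (Complex.continuous_normSq.tendsto _).comp hw_lim
    simpa [Function.comp_def, Complex.normSq_apply, sq] using this
  have h1r : Tendsto (fun r : ℝ => 1 - r) (nhdsWithin 1 (Set.Iio 1)) (nhds 0) := by
    have h : Tendsto (fun r : ℝ => 1 - r) (nhds (1:ℝ)) (nhds (1 - 1 : ℝ)) :=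
      tendsto_const_nhds.sub tendsto_id
    simpa using h.mono_left nhdsWithin_le_nhds
  have hratio : Tendsto (fun r : ℝ => (1 - r) / (-Real.log r)) (nhdsWithin 1 (Set.Iio 1)) (nhds 1) := by
    have hslope : Tendsto (slope Real.log 1) (nhdsWithin 1 {(1:ℝ)}ᶜ) (nhds 1) := by
      have := (Real.hasDerivAt_log one_ne_zero)
      rw [hasDerivAt_iff_tendsto_slope] at this
      simpa using this
    have h1 : Tendsto (slope Real.log 1) (nhdsWithin 1 (Set.Iio 1)) (nhds 1) :=
      hslope.mono_left (nhdsWithin_mono _ (fun x hx => ne_of_lt hx))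
    have h2 : Tendsto (fun r : ℝ => (slope Real.log 1 r)⁻¹) (nhdsWithin 1 (Set.Iio 1)) (nhds 1) := by
      have := h1.inv₀ one_ne_zero
      simpa using this
    refine h2.congr' ?_
    filter_upwards [self_mem_nhdsWithin] with r hr
    have hr1 : r - 1 ≠ 0 := sub_ne_zero.mpr (ne_of_lt hr)
    rw [slope_def_field, div_eq_mul_inv, mul_inv, inv_inv, Real.log_one, sub_zero,
      div_neg, ← neg_div, neg_sub, div_eq_mul_inv, mul_comm]
  have hmain : Tendsto
      (fun r : ℝ => ((1 - r) / (-Real.log r)) * (2 * (w r).re - (1 - r) * Complex.normSq (w r)))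
      (nhdsWithin 1 (Set.Iio 1)) (nhds (2 * L)) := by
    have := hratio.mul ((hre.const_mul 2).sub (h1r.mul hns))
    simpa using this
  refine hmain.congr' ?_
  filter_upwards [self_mem_nhdsWithin] with r hr
  have hr1 : (1 : ℂ) - (r : ℂ) ≠ 0 := by
    intro h
    have : (r : ℂ) = 1 := by linear_combination -h
    have : r = (1 : ℝ) := by exact_mod_cast this
    exact absurd this (ne_of_lt hr)
  have hgr : g r = b * (1 - ((1 : ℂ) - (r : ℂ)) * w r) := by
    have : w r * (((1 : ℂ) - (r : ℂ)) * b) = b - g r :=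
      div_mul_cancel₀ _ (mul_ne_zero hr1 hb0)
    linear_combination this
  have key : 1 - ‖g r‖ ^ 2 = (1 - r) * (2 * (w r).re - (1 - r) * Complex.normSq (w r)) := by
    rw [Complex.sq_norm, hgr, Complex.normSq_mul]
    have hnb : Complex.normSq b = 1 := by
      rw [← Complex.sq_norm, hb]; norm_num
    rw [hnb, one_mul]
    simp only [Complex.normSq_apply, Complex.sub_re, Complex.sub_im, Complex.one_re,
      Complex.one_im, Complex.mul_re, Complex.mul_im, Complex.ofReal_re, Complex.ofReal_im]
    ring
  rw [key]
  ring
end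

section
/- Under the hypotheses of the previous statement (radial limit f(e^{iθ}) of modulus 1 and angular-derivative limit L ∈ [0,∞)), one also has lim_{r→1⁻} ln|f(re^{iθ})| / ln r = L. -/
open Filter Set

/-- Under the same hypotheses as the previous statement (radial limit of modulus 1
and angular-derivative limit L ∈ [0,∞)), one has ln|f(re^{iθ})| / ln r → L. -/
theorem stmt8 (f : ℂ → ℂ) (hf : DifferentiableOn ℂ f (Metric.ball 0 1))
    (θ : ℝ) (b : ℂ) (hb : ‖b‖ = 1)
    (hblim : Filter.Tendsto (fun r : ℝ => f ((r : ℂ) * Complex.exp (θ * Complex.I)))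
      (nhdsWithin 1 (Set.Iio 1)) (nhds b))
    (L : ℝ) (hL : 0 ≤ L)
    (hLlim : Filter.Tendsto
      (fun r : ℝ => (b - f ((r : ℂ) * Complex.exp (θ * Complex.I))) / (((1 : ℂ) - (r : ℂ)) * b))
      (nhdsWithin 1 (Set.Iio 1)) (nhds (L : ℂ))) :
    Filter.Tendsto
      (fun r : ℝ => Real.log ‖f ((r : ℂ) * Complex.exp (θ * Complex.I))‖ / Real.log r)
      (nhdsWithin 1 (Set.Iio 1)) (nhds L) := by
  have hb0 : b ≠ 0 := by
    intro h; rw [h] at hb; simp at hb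
  set e : ℂ := Complex.exp (θ * Complex.I) with he
  set q : ℝ → ℂ := fun r => (b - f ((r : ℂ) * e)) / (((1 : ℂ) - (r : ℂ)) * b) with hq
  set u : ℝ → ℂ := fun r => ((1 : ℂ) - (r : ℂ)) * q r with hu
  set v : ℝ → ℝ := fun r => Complex.normSq (1 - u r) - 1 with hv
  -- limits of pieces of q
  have hqre : Tendsto (fun r => (q r).re) (nhdsWithin 1 (Set.Iio 1)) (nhds L) := by
    have := (Complex.continuous_re.tendsto _).comp hLlim
    simpa [Function.comp_def] using this
  have hqns : Tendsto (fun r => Complex.normSq (q r)) (nhdsWithin 1 (Set.Iio 1))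
      (nhds (Complex.normSq (L : ℂ))) := by
    exact (Complex.continuous_normSq.tendsto _).comp hLlim
  have h1r : Tendsto (fun r : ℝ => 1 - r) (nhdsWithin 1 (Set.Iio 1)) (nhds 0) := by
    have h : Tendsto (fun r : ℝ => 1 - r) (nhds 1) (nhds (1 - 1)) :=
      (tendsto_id (α := ℝ)).const_sub 1
    simpa using h.mono_left nhdsWithin_le_nhds
  -- A : v r / (r - 1) → 2L
  have hA : Tendsto (fun r => v r / (r - 1)) (nhdsWithin 1 (Set.Iio 1)) (nhds (2 * L)) := by
    have hA' : Tendsto (fun r => 2 * (q r).re - (1 - r) * Complex.normSq (q r))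
        (nhdsWithin 1 (Set.Iio 1)) (nhds (2 * L)) := by
      have := ((hqre.const_mul 2).sub (h1r.mul hqns))
      simpa using this
    refine hA'.congr' ?_
    filter_upwards [self_mem_nhdsWithin] with r (hr : r < 1)
    have hr1 : r - 1 ≠ 0 := by linarith [hr]
    have hvr : v r = (1 - r)^2 * Complex.normSq (q r) - 2 * ((1 - r) * (q r).re) := by
      have hur : u r = ((1 - r : ℝ) : ℂ) * q r := by
        simp only [hu]; push_cast; ring
      simp only [hv, hur, Complex.normSq_sub, Complex.normSq_mul, Complex.normSq_ofReal,
        Complex.normSq_one, one_mul, Complex.conj_re, Complex.re_ofReal_mul]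
      ring
    rw [hvr]
    field_simp
    ring
  -- v → 0
  have hv0 : Tendsto v (nhdsWithin 1 (Set.Iio 1)) (nhds 0) := by
    have h2 : Tendsto (fun r : ℝ => r - 1) (nhdsWithin 1 (Set.Iio 1)) (nhds 0) := by
      have h : Tendsto (fun r : ℝ => r - 1) (nhds 1) (nhds (1 - 1)) :=
        (tendsto_id (α := ℝ)).sub_const 1
      simpa using h.mono_left nhdsWithin_le_nhds
    have := hA.mul h2
    rw [mul_zero] at this
    refine this.congr' ?_
    filter_upwards [self_mem_nhdsWithin] with r (hr : r < 1)
    have hr1 : r - 1 ≠ 0 := by linarith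
    field_simp
  -- psi
  set ψ : ℝ → ℝ := fun x => if x = 0 then 1 else Real.log (1 + x) / x with hψdef
  have hψ : Tendsto ψ (nhds 0) (nhds 1) := by
    have hslope : Tendsto (slope Real.log 1) (nhdsWithin 1 {(1:ℝ)}ᶜ) (nhds 1) := by
      have h := (Real.hasDerivAt_log one_ne_zero)
      rw [hasDerivAt_iff_tendsto_slope] at h
      simpa using h
    have hmap : Tendsto (fun x : ℝ => 1 + x) (nhdsWithin 0 {(0:ℝ)}ᶜ) (nhdsWithin 1 {(1:ℝ)}ᶜ) := by
      apply Tendsto.inf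
      · have h : Tendsto (fun x : ℝ => 1 + x) (nhds 0) (nhds (1 + 0)) :=
          (tendsto_id (α := ℝ)).const_add 1
        have h' : Tendsto (fun x : ℝ => 1 + x) (nhds 0) (nhds 1) := by simpa using h
        exact h'
      · rw [tendsto_principal]
        filter_upwards [mem_principal_self _] with x (hx : x ∈ {(0:ℝ)}ᶜ)
        simp only [mem_compl_iff, mem_singleton_iff] at hx ⊢
        intro h; apply hx; linarith
    have hpunct : Tendsto ψ (nhdsWithin 0 {(0:ℝ)}ᶜ) (nhds 1) := by
      refine (hslope.comp hmap).congr' ?_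
      filter_upwards [self_mem_nhdsWithin] with x hx
      simp only [mem_compl_iff, mem_singleton_iff] at hx
      simp [hψdef, hx, slope, Real.log_one, Function.comp, div_eq_inv_mul]
    rw [← nhdsNE_sup_pure 0]
    refine hpunct.sup ?_
    have h0 : ψ 0 = 1 := by simp [hψdef]
    simpa [h0] using tendsto_pure_nhds ψ 0
  have hψv : Tendsto (fun r => ψ (v r)) (nhdsWithin 1 (Set.Iio 1)) (nhds 1) := hψ.comp hv0
  -- C : (r-1)/log r → 1
  have hC : Tendsto (fun r : ℝ => (r - 1) / Real.log r) (nhdsWithin 1 (Set.Iio 1)) (nhds 1) := by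
    have hslope : Tendsto (slope Real.log 1) (nhdsWithin 1 {(1:ℝ)}ᶜ) (nhds 1) := by
      have h := (Real.hasDerivAt_log one_ne_zero)
      rw [hasDerivAt_iff_tendsto_slope] at h
      simpa using h
    have hmono : nhdsWithin (1:ℝ) (Set.Iio 1) ≤ nhdsWithin 1 {(1:ℝ)}ᶜ :=
      nhdsWithin_mono _ (fun x hx => ne_of_lt hx)
    have h1 : Tendsto (fun r : ℝ => Real.log r / (r - 1)) (nhdsWithin 1 (Set.Iio 1)) (nhds 1) := by
      refine ((hslope.mono_left hmono).congr' ?_)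
      filter_upwards [self_mem_nhdsWithin] with r (hr : r < 1)
      simp [slope, Real.log_one, div_eq_inv_mul]
    have := h1.inv₀ one_ne_zero
    rw [inv_one] at this
    refine this.congr ?_
    intro r
    rw [inv_div]
  -- combine
  have hmain : Tendsto (fun r : ℝ => (1/2) * (ψ (v r) * (v r / (r - 1)) * ((r - 1) / Real.log r)))
      (nhdsWithin 1 (Set.Iio 1)) (nhds L) := by
    have := ((hψv.mul hA).mul hC).const_mul (1/2 : ℝ)
    have heq : (1/2 : ℝ) * (1 * (2*L) * 1) = L := by ring
    rw [heq] at this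
    exact this
  refine hmain.congr' ?_
  have hIoi : ∀ᶠ r in nhdsWithin (1:ℝ) (Set.Iio 1), (0:ℝ) < r :=
    eventually_nhdsWithin_of_eventually_nhds (eventually_gt_nhds one_pos)
  have hvgt : ∀ᶠ r in nhdsWithin (1:ℝ) (Set.Iio 1), -1 < v r := by
    have : Set.Ioi (-1:ℝ) ∈ nhds (0:ℝ) := Ioi_mem_nhds (by norm_num)
    exact hv0.eventually (eventually_of_mem this (fun x hx => hx))
  filter_upwards [self_mem_nhdsWithin, hIoi, hvgt] with r hr hr0 hvr
  have hr1 : r < 1 := hr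
  have hrc : ((1 : ℂ) - (r : ℂ)) ≠ 0 := by
    intro h
    have : (r : ℂ) = 1 := by linear_combination -h
    have : r = 1 := by exact_mod_cast this
    linarith
  have hsub : r - 1 ≠ 0 := by linarith
  have hlogr : Real.log r ≠ 0 := ne_of_lt (Real.log_neg hr0 hr1)
  -- key identity
  have hkey : f ((r : ℂ) * e) = b * (1 - u r) := by
    simp only [hu, hq]
    field_simp
    ring
  have habs : ‖f ((r : ℂ) * e)‖ = ‖1 - u r‖ := by
    rw [hkey, norm_mul, hb, one_mul]
  have hns : Complex.normSq (1 - u r) = 1 + v r := by simp [hv]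
  have hpos : (0:ℝ) ≤ 1 + v r := by linarith
  have habs2 : ‖1 - u r‖ = Real.sqrt (1 + v r) := by
    rw [Complex.norm_def, hns]
  have hlog : Real.log ‖f ((r:ℂ) * e)‖ = Real.log (1 + v r) / 2 := by
    rw [habs, habs2, Real.log_sqrt hpos]
  rw [hlog]
  by_cases hvz : v r = 0
  · simp [hvz, hψdef]
  · simp only [hψdef, if_neg hvz]
    field_simp
end

section
/- Let g : 𝔻 → ℂ be holomorphic and suppose that both exp(g) extends continuously to a boundary point ζ ∈ T and that |Im g| < π on a neighborhood U ∩ 𝔻 of ζ. Then g itself extends continuously to ζ. -/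
/-- If g is holomorphic on the disc, exp(g) extends continuously to a boundary
point ζ (with nonzero limit), and |Im g| < π near ζ, then g itself extends
continuously to ζ. -/
theorem stmt15 (g : ℂ → ℂ) (hg : DifferentiableOn ℂ g (Metric.ball 0 1))
    (ζ : ℂ) (hζ : ‖ζ‖ = 1) (L : ℂ) (hL : L ≠ 0)
    (hext : Filter.Tendsto (fun z => Complex.exp (g z))
      (nhdsWithin ζ (Metric.ball 0 1)) (nhds L))
    (U : Set ℂ) (hU : IsOpen U) (hζU : ζ ∈ U)
    (hIm : ∀ z ∈ U ∩ Metric.ball (0:ℂ) 1, |(g z).im| < Real.pi) :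
    ∃ c : ℂ, Filter.Tendsto g (nhdsWithin ζ (Metric.ball 0 1)) (nhds c) := by
  have hUev : ∀ᶠ z in nhdsWithin ζ (Metric.ball 0 1), z ∈ U ∩ Metric.ball (0:ℂ) 1 := by
    filter_upwards [mem_nhdsWithin_of_mem_nhds (hU.mem_nhds hζU), self_mem_nhdsWithin] with z h1 h2
    exact ⟨h1, h2⟩
  have hlogexp : ∀ᶠ z in nhdsWithin ζ (Metric.ball 0 1), Complex.log (Complex.exp (g z)) = g z := by
    filter_upwards [hUev] with z hz
    have h := abs_lt.mp (hIm z hz)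
    exact Complex.log_exp h.1 h.2.le
  by_cases hslit : L ∈ Complex.slitPlane
  · exact ⟨Complex.log L, ((continuousAt_clog hslit).tendsto.comp hext).congr' hlogexp⟩
  · rw [Complex.mem_slitPlane_iff] at hslit
    push_neg at hslit
    obtain ⟨hLre', hLim⟩ := hslit
    have hLre : L.re < 0 := by
      rcases lt_or_eq_of_le hLre' with h | h
      · exact h
      · exact absurd (Complex.ext (by simp [← h]) hLim) hL
    have habsL : ‖L‖ = -L.re := by
      rw [show L = (L.re : ℂ) from Complex.ext rfl (by simp [hLim]), Complex.norm_real, Real.norm_eq_abs,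
        abs_of_neg hLre, Complex.ofReal_re]
    have habspos : 0 < ‖L‖ := norm_pos_iff.mpr hL
    -- eventually dist (exp (g z)) L < |L| and z ∈ U
    have h1 : ∀ᶠ z in nhdsWithin ζ (Metric.ball 0 1),
        dist (Complex.exp (g z)) L < ‖L‖ ∧ z ∈ U ∩ Metric.ball (0:ℂ) 1 :=
      ((Metric.tendsto_nhds.mp hext) _ habspos).and hUev
    rw [eventually_nhdsWithin_iff] at h1
    obtain ⟨r, hr, hball⟩ := Metric.eventually_nhds_iff_ball.mp h1
    set V : Set ℂ := Metric.ball ζ r ∩ Metric.ball (0:ℂ) 1 with hV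
    have hVsub : ∀ z ∈ V, dist (Complex.exp (g z)) L < ‖L‖ ∧ z ∈ U ∩ Metric.ball (0:ℂ) 1 :=
      fun z hz => hball z hz.1 hz.2
    -- cos (Im g z) < 0 on V
    have hcos : ∀ z ∈ V, Real.cos ((g z).im) < 0 := by
      intro z hz
      obtain ⟨hd, hzU⟩ := hVsub z hz
      have hre : (Complex.exp (g z)).re < 0 := by
        have h2 : (Complex.exp (g z)).re - L.re ≤ ‖Complex.exp (g z) - L‖ := by
          simpa using Complex.re_le_norm (Complex.exp (g z) - L)
        rw [Complex.dist_eq] at hd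
        linarith [habsL ▸ hd]
      rw [Complex.exp_re] at hre
      nlinarith [Real.exp_pos ((g z).re)]
    have hne : ∀ z ∈ V, (g z).im ≠ 0 := by
      intro z hz h0
      have := hcos z hz
      rw [h0, Real.cos_zero] at this
      linarith
    -- V is preconnected, nonempty not needed; sign constancy
    have hVconn : IsPreconnected V :=
      ((convex_ball ζ r).inter (convex_ball 0 1)).isPreconnected
    have hfc : ContinuousOn (fun z => (g z).im) V :=
      Complex.continuous_im.comp_continuousOn (hg.continuousOn.mono Set.inter_subset_right)
    have hsign : (∀ z ∈ V, 0 < (g z).im) ∨ (∀ z ∈ V, (g z).im < 0) := by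
      by_contra hc
      push_neg at hc
      obtain ⟨⟨a, ha, ha'⟩, ⟨b, hb, hb'⟩⟩ := hc
      have h0 : (0:ℝ) ∈ Set.Icc ((g a).im) ((g b).im) := ⟨ha', hb'⟩
      obtain ⟨c, hcV, hc0⟩ := hVconn.intermediate_value ha hb hfc h0
      exact hne c hcV hc0
    have hVev : ∀ᶠ z in nhdsWithin ζ (Metric.ball 0 1), z ∈ V := by
      filter_upwards [mem_nhdsWithin_of_mem_nhds (Metric.ball_mem_nhds ζ hr),
        self_mem_nhdsWithin] with z h1 h2
      exact ⟨h1, h2⟩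
    rcases hsign with hpos | hneg
    · refine ⟨Real.log (‖L‖) + Real.pi * Complex.I, ?_⟩
      have himpos : ∀ᶠ z in nhdsWithin ζ (Metric.ball 0 1),
          Complex.exp (g z) ∈ {w : ℂ | 0 ≤ w.im} := by
        filter_upwards [hVev] with z hz
        have hlt : (g z).im < Real.pi := (abs_lt.mp (hIm z (hVsub z hz).2)).2
        have : 0 < (Complex.exp (g z)).im := by
          rw [Complex.exp_im]
          exact mul_pos (Real.exp_pos _) (Real.sin_pos_of_pos_of_lt_pi (hpos z hz) hlt)
        exact this.le
      have htend : Filter.Tendsto (fun z => Complex.exp (g z)) (nhdsWithin ζ (Metric.ball 0 1))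
          (nhdsWithin L {w : ℂ | 0 ≤ w.im}) := tendsto_nhdsWithin_iff.mpr ⟨hext, himpos⟩
      exact ((Complex.tendsto_log_nhdsWithin_im_nonneg_of_re_neg_of_im_zero hLre hLim).comp
        htend).congr' hlogexp
    · refine ⟨Real.log (‖L‖) - Real.pi * Complex.I, ?_⟩
      have himneg : ∀ᶠ z in nhdsWithin ζ (Metric.ball 0 1),
          Complex.exp (g z) ∈ {w : ℂ | w.im < 0} := by
        filter_upwards [hVev] with z hz
        have hlt : -Real.pi < (g z).im := (abs_lt.mp (hIm z (hVsub z hz).2)).1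
        have : (Complex.exp (g z)).im < 0 := by
          rw [Complex.exp_im]
          exact mul_neg_of_pos_of_neg (Real.exp_pos _)
            (Real.sin_neg_of_neg_of_neg_pi_lt (hneg z hz) hlt)
        exact this
      have htend : Filter.Tendsto (fun z => Complex.exp (g z)) (nhdsWithin ζ (Metric.ball 0 1))
          (nhdsWithin L {w : ℂ | w.im < 0}) := tendsto_nhdsWithin_iff.mpr ⟨hext, himneg⟩
      exact ((Complex.tendsto_log_nhdsWithin_im_neg_of_re_neg_of_im_zero hLre hLim).comp
        htend).congr' hlogexp
end
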